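/- Let F_{d+1} be the Fourier matrix of order d+1, with Lagrange polynomials (ℓ_1(z); …; ℓ_{d+1}(z)) = (1/(d+1)) F_{d+1}^* (1; z). Then the degree-one Lebesgue constant on the complex torus satisfies Λ₁ = max_{z ∈ 𝕋^d} Σ_{j=1}^{d+1} |ℓ_j(z)| ≤ √(d+1). -/

import Mathlib

open Matrix

/-- The Fourier matrix `F_n = [ω^{jk}]_{1 ≤ j,k ≤ n}` of order `n`, where `ω = exp(2πi/n)`. -/
noncomputable def fourierMatrix (n : ℕ) : Matrix (Fin n) (Fin n) ℂ :=
  Matrix.of fun j k : Fin n =>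
    Complex.exp (2 * Real.pi * Complex.I * (((j : ℕ) : ℂ) + 1) * (((k : ℕ) : ℂ) + 1) / n)

/-- The values at `z ∈ ℂ^d` of the degree-one fundamental Lagrange polynomials associated to
the `d+1` points of the torus obtained by deleting the first column of the Fourier matrix
`F_{d+1}`:  `(ℓ_1(z); …; ℓ_{d+1}(z)) = (1/(d+1)) F_{d+1}^* (1; z)`. -/
noncomputable def torusLagrange (d : ℕ) (z : Fin d → ℂ) (i : Fin (d + 1)) : ℂ :=
  (((d : ℂ) + 1)⁻¹) * ((fourierMatrix (d + 1))ᴴ *ᵥ (Fin.cons 1 z : Fin (d + 1) → ℂ)) i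

lemma fourier_orth (n : ℕ) (hn : 0 < n) (k l : Fin n) :
    ∑ j : Fin n, (starRingEnd ℂ) (fourierMatrix n k j) * fourierMatrix n l j
      = if k = l then (n : ℂ) else 0 := by
  have hnC : (n : ℂ) ≠ 0 := Nat.cast_ne_zero.mpr hn.ne'
  set ζ : ℂ := Complex.exp (2 * Real.pi * Complex.I * (((l : ℕ) : ℂ) - ((k : ℕ) : ℂ)) / n) with hζ
  have hterm : ∀ j : Fin n,
      (starRingEnd ℂ) (fourierMatrix n k j) * fourierMatrix n l j = ζ ^ ((j : ℕ) + 1) := by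
    intro j
    simp only [fourierMatrix, Matrix.of_apply, ← Complex.exp_conj, ← Complex.exp_add,
      ← Complex.exp_nat_mul, hζ]
    congr 1
    have : (starRingEnd ℂ) (2 * Real.pi * Complex.I * (((k : ℕ) : ℂ) + 1) * (((j : ℕ) : ℂ) + 1) / n)
        = -(2 * Real.pi * Complex.I * (((k : ℕ) : ℂ) + 1) * (((j : ℕ) : ℂ) + 1) / n) := by
      simp only [map_div₀, _root_.map_mul, _root_.map_add, _root_.map_one, Complex.conj_I,
        Complex.conj_natCast, Complex.conj_ofReal, map_ofNat]
      ring
    rw [this]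
    push_cast
    field_simp
    ring
  simp only [hterm]
  rw [Fin.sum_univ_eq_sum_range (fun j => ζ ^ (j + 1))]
  by_cases hkl : k = l
  · have h1 : ζ = 1 := by subst hkl; simp [hζ]
    simp [h1, hkl]
  · have hπ : (2 * (Real.pi : ℂ) * Complex.I) ≠ 0 := by
      simp [Real.pi_ne_zero, Complex.I_ne_zero, Complex.ofReal_ne_zero]
    have hζn : ζ ^ n = 1 := by
      rw [hζ, ← Complex.exp_nat_mul]
      have : (n : ℂ) * (2 * Real.pi * Complex.I * (((l : ℕ) : ℂ) - ((k : ℕ) : ℂ)) / n)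
          = ((((l : ℕ) : ℤ) - ((k : ℕ) : ℤ) : ℤ) : ℂ) * (2 * Real.pi * Complex.I) := by
        push_cast
        field_simp
      rw [this, Complex.exp_int_mul_two_pi_mul_I]
    have hζ1 : ζ ≠ 1 := by
      intro h
      rw [hζ, Complex.exp_eq_one_iff] at h
      obtain ⟨t, ht⟩ := h
      field_simp at ht
      have ht' : (2 * (Real.pi : ℂ) * Complex.I) * (((l : ℕ) : ℂ) - ((k : ℕ) : ℂ))
          = (2 * (Real.pi : ℂ) * Complex.I) * ((t : ℂ) * n) := by linear_combination (2 * (Real.pi : ℂ) * Complex.I) * ht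
      have h3 : (((l : ℕ) : ℂ)) - ((k : ℕ) : ℂ) = ((t * n : ℤ) : ℂ) := by
        push_cast
        linear_combination mul_left_cancel₀ hπ ht'
      have h4 : ((l : ℕ) : ℤ) - ((k : ℕ) : ℤ) = t * n := by exact_mod_cast h3
      have hne : ((l : ℕ) : ℤ) - ((k : ℕ) : ℤ) ≠ 0 := by
        intro h0
        exact hkl (Fin.ext (by omega)).symm
      have hdvd : (n : ℤ) ∣ (((l : ℕ) : ℤ) - ((k : ℕ) : ℤ)) := ⟨t, by linarith [h4]⟩
      have hle : (n : ℤ) ≤ |((l : ℕ) : ℤ) - ((k : ℕ) : ℤ)| :=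
        Int.le_of_dvd (abs_pos.mpr hne) ((dvd_abs _ _).mpr hdvd)
      have hlt : |((l : ℕ) : ℤ) - ((k : ℕ) : ℤ)| < n := by
        have := l.isLt; have := k.isLt
        rw [abs_lt]; omega
      omega
    have hsum : ∑ j ∈ Finset.range n, ζ ^ (j + 1) = ζ * ∑ j ∈ Finset.range n, ζ ^ j := by
      rw [Finset.mul_sum]; exact Finset.sum_congr rfl fun j _ => by ring
    rw [hsum, geom_sum_eq hζ1, hζn]
    simp [hkl]

/-- the degree-one Lebesgue constant for the Fourier points on the complex
torus satisfies `Λ₁ = max_{z ∈ 𝕋^d} ∑ⱼ |ℓⱼ(z)| ≤ √(d+1)`. -/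
theorem fourier_lebesgue_le (d : ℕ) (hd : 1 ≤ d) (z : Fin d → ℂ)
    (hz : ∀ k, ‖z k‖ = 1) :
    ∑ j : Fin (d + 1), ‖torusLagrange d z j‖ ≤ Real.sqrt ((d : ℝ) + 1) := by
  set n : ℕ := d + 1 with hn
  set v : Fin n → ℂ := (Fin.cons 1 z : Fin n → ℂ) with hv
  have hvabs : ∀ i, ‖v i‖ = 1 := by
    intro i
    refine Fin.cases ?_ ?_ i <;> simp [hv, hz]
  set w : Fin n → ℂ := (fourierMatrix n)ᴴ *ᵥ v with hw
  -- key: ∑ |w j|² = n²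
  have hWC : ∑ j : Fin n, w j * (starRingEnd ℂ) (w j) = ((n : ℂ)) ^ 2 := by
    have hwj : ∀ j, w j = ∑ k : Fin n, (starRingEnd ℂ) (fourierMatrix n k j) * v k := by
      intro j
      simp [hw, Matrix.mulVec, dotProduct, Matrix.conjTranspose_apply]
    calc ∑ j : Fin n, w j * (starRingEnd ℂ) (w j)
        = ∑ j : Fin n, ∑ k : Fin n, ∑ l : Fin n,
            (v k * (starRingEnd ℂ) (v l)) *
              ((starRingEnd ℂ) (fourierMatrix n k j) * fourierMatrix n l j) := by
          refine Finset.sum_congr rfl fun j _ => ?_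
          rw [hwj j, map_sum, Finset.sum_mul_sum]
          refine Finset.sum_congr rfl fun k _ => Finset.sum_congr rfl fun l _ => ?_
          simp only [_root_.map_mul, Complex.conj_conj]
          ring
      _ = ∑ k : Fin n, ∑ l : Fin n, (v k * (starRingEnd ℂ) (v l)) *
            ∑ j : Fin n, (starRingEnd ℂ) (fourierMatrix n k j) * fourierMatrix n l j := by
          rw [Finset.sum_comm]
          refine Finset.sum_congr rfl fun k _ => ?_
          rw [Finset.sum_comm]
          refine Finset.sum_congr rfl fun l _ => ?_
          rw [Finset.mul_sum]
      _ = ∑ k : Fin n, (v k * (starRingEnd ℂ) (v k)) * (n : ℂ) := by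
          refine Finset.sum_congr rfl fun k _ => ?_
          simp only [fourier_orth n (Nat.succ_pos d) _ _, mul_ite, mul_zero]
          simp
      _ = ((n : ℂ)) ^ 2 := by
          have : ∀ k : Fin n, v k * (starRingEnd ℂ) (v k) = 1 := by
            intro k
            rw [Complex.mul_conj]
            norm_cast
            rw [Complex.normSq_eq_norm_sq, hvabs k]; norm_num
          simp [this, Finset.sum_const]
          ring
  have hW : ∑ j : Fin n, ‖w j‖ ^ 2 = (n : ℝ) ^ 2 := by
    have e : ∀ j, ((‖w j‖ : ℂ)) ^ 2 = w j * (starRingEnd ℂ) (w j) := fun j => by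
      rw [Complex.mul_conj]; norm_cast; exact Complex.sq_norm _
    have : ((∑ j : Fin n, ‖w j‖ ^ 2 : ℝ) : ℂ) = ((n : ℂ)) ^ 2 := by
      calc ((∑ j : Fin n, ‖w j‖ ^ 2 : ℝ) : ℂ)
          = ∑ j : Fin n, ((‖w j‖ : ℂ)) ^ 2 := by push_cast; rfl
        _ = ((n : ℂ)) ^ 2 := by simp_rw [e]; exact hWC
    exact_mod_cast this
  -- ∑ |ℓ j|² = 1
  have habs : ∀ j, ‖torusLagrange d z j‖ = (n : ℝ)⁻¹ * ‖w j‖ := by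
    intro j
    have h1 : torusLagrange d z j = (((n : ℝ) : ℂ))⁻¹ * w j := by
      rw [torusLagrange]
      congr 1
      push_cast [hn]
      ring
    rw [h1, norm_mul, norm_inv, Complex.norm_real, Real.norm_eq_abs,
      abs_of_nonneg (by positivity : (0:ℝ) ≤ (n:ℝ))]
  have hL2 : ∑ j : Fin n, ‖torusLagrange d z j‖ ^ 2 = 1 := by
    simp only [habs, mul_pow, ← Finset.mul_sum]
    rw [hW]
    have : ((n : ℝ)) ≠ 0 := by positivity
    field_simp
  -- Cauchy–Schwarz / Chebyshev
  have hcs : (∑ j : Fin n, ‖torusLagrange d z j‖) ^ 2 ≤ (n : ℝ) := by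
    have := sq_sum_le_card_mul_sum_sq (s := (Finset.univ : Finset (Fin n)))
      (f := fun j => ‖torusLagrange d z j‖)
    simpa [hL2] using this
  have hnonneg : 0 ≤ ∑ j : Fin n, ‖torusLagrange d z j‖ :=
    Finset.sum_nonneg fun j _ => norm_nonneg _
  have : (d : ℝ) + 1 = (n : ℝ) := by push_cast [hn]; ring
  rw [this]
  exact (Real.le_sqrt hnonneg (by positivity)).mpr (by simpa using hcs)
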